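/- Let A ⊆ X be bounded and ε ≥ 0. If for every sequence (x_n) in A the intersection over k of the norm-closed convex hulls of ({x_n : n ≥ k} + ε·B_X) is nonempty, then A has 2ε-interchangeable double limits with B_{X*}, i.e., |lim_n lim_m x*_m(x_n) − lim_m lim_n x*_m(x_n)| ≤ 2ε whenever all limits exist for sequences (x_n) in A and (x*_m) in B_{X*}. -/

import Mathlib

noncomputable section
open Filter Topology Set NormedSpace Pointwise

variable {X : Type*} [NormedAddCommGroup X] [NormedSpace ℝ X] [CompleteSpace X]

/-- `B` is a boundary for `X`: a subset of the dual unit sphere on which every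
element of `X` attains its norm. -/
def IsBoundary (B : Set (StrongDual ℝ X)) : Prop :=
  (∀ f ∈ B, ‖f‖ = 1) ∧ ∀ x : X, ∃ f ∈ B, f x = ‖x‖

/-- The closure of `S` in the topology `σ_B` of pointwise convergence on `B`. -/
def sigmaClosure (B : Set (StrongDual ℝ X)) (S : Set X) : Set X :=
  {x | ∀ ε > (0 : ℝ), ∀ F : Finset (StrongDual ℝ X), (F : Set (StrongDual ℝ X)) ⊆ B →
    ∃ y ∈ S, ∀ f ∈ F, |f x - f y| < ε}

/-- `A` has `ε`-interchangeable double limits with `M`. -/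
def DoubleLimits (A : Set X) (ε : ℝ) (M : Set (StrongDual ℝ X)) : Prop :=
  ∀ (x : ℕ → X) (f : ℕ → StrongDual ℝ X), (∀ n, x n ∈ A) → (∀ m, f m ∈ M) →
    ∀ (u v : ℕ → ℝ) (l L : ℝ),
      (∀ n, Tendsto (fun m => f m (x n)) atTop (𝓝 (u n))) →
      Tendsto u atTop (𝓝 l) →
      (∀ m, Tendsto (fun n => f m (x n)) atTop (𝓝 (v m))) →
      Tendsto v atTop (𝓝 L) →
      |l - L| ≤ ε

theorem chains_imp_double_limits (A : Set X) (hA : Bornology.IsBounded A)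
    (ε : ℝ) (hε : 0 ≤ ε)
    (h : ∀ x : ℕ → X, (∀ n, x n ∈ A) →
      (⋂ k : ℕ, closure (convexHull ℝ
        ({y : X | ∃ n ≥ k, y = x n} + ε • Metric.closedBall (0 : X) 1))).Nonempty) :
    DoubleLimits A (2 * ε) {f : StrongDual ℝ X | ‖f‖ ≤ 1} := by
  intro x f hx hf u v l L hu hul hv hvL
  obtain ⟨z, hz⟩ := h x hx
  set S : ℕ → Set X :=
    fun k => {y : X | ∃ n ≥ k, y = x n} + ε • Metric.closedBall (0 : X) 1 with hS
  have hzk : ∀ k, z ∈ closure (convexHull ℝ (S k)) := fun k => Set.mem_iInter.mp hz k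
  -- bound on elements of the scaled ball
  have hball : ∀ m, ∀ b ∈ ε • Metric.closedBall (0 : X) 1, |f m b| ≤ ε := by
    intro m b hb
    obtain ⟨c, hc, rfl⟩ := hb
    rw [Metric.mem_closedBall, dist_zero_right] at hc
    have h1 : ‖f m (ε • c)‖ ≤ ‖f m‖ * ‖ε • c‖ := (f m).le_opNorm _
    have h2 : ‖ε • c‖ ≤ ε := by
      rw [norm_smul, Real.norm_eq_abs, abs_of_nonneg hε]
      nlinarith
    have h3 : ‖f m‖ ≤ 1 := hf m
    have h0 : (0:ℝ) ≤ ‖ε • c‖ := norm_nonneg _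
    calc |f m (ε • c)| = ‖f m (ε • c)‖ := (Real.norm_eq_abs _).symm
      _ ≤ ‖f m‖ * ‖ε • c‖ := h1
      _ ≤ 1 * ε := by nlinarith
      _ = ε := one_mul ε
  -- Claim A : |f m z - v m| ≤ ε for every m
  have claimA : ∀ m, |f m z - v m| ≤ ε := by
    intro m
    have hstep : ∀ δ > (0:ℝ), |f m z - v m| ≤ ε + δ := by
      intro δ hδ
      obtain ⟨k, hk⟩ := Metric.tendsto_atTop.mp (hv m) δ hδ
      have hsub : closure (convexHull ℝ (S k)) ⊆
          (f m) ⁻¹' Set.Icc (v m - (ε + δ)) (v m + (ε + δ)) := by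
        apply closure_minimal
        · apply convexHull_min
          · rintro y ⟨a, ⟨n, hn, rfl⟩, b, hb, rfl⟩
            have h1 : dist (f m (x n)) (v m) < δ := hk n hn
            rw [Real.dist_eq] at h1
            have h2 : |f m b| ≤ ε := hball m b hb
            have h1' := abs_le.mp h1.le
            have h2' := abs_le.mp h2
            simp only [Set.mem_preimage, map_add, Set.mem_Icc]
            constructor <;> linarith
          · exact (convex_Icc _ _).linear_preimage (f m).toLinearMap
        · exact isClosed_Icc.preimage (f m).continuous
      have := hsub (hzk k)
      simp only [Set.mem_preimage, Set.mem_Icc] at this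
      rw [abs_le]; constructor <;> linarith
    by_contra hcon
    push_neg at hcon
    have := hstep ((|f m z - v m| - ε)/2) (by linarith)
    linarith
  -- main estimate
  have key : ∀ δ > (0:ℝ), |l - L| ≤ 2 * ε + 4 * δ := by
    intro δ hδ
    obtain ⟨k, hk⟩ := Metric.tendsto_atTop.mp hul δ hδ
    obtain ⟨c, hc, hcz⟩ := Metric.mem_closure_iff.mp (hzk k) δ hδ
    rw [convexHull_eq] at hc
    obtain ⟨ι, t, w, p, hw0, hw1, hps, hcm⟩ := hc
    have hps' : ∀ i : t, ∃ n ≥ k, ∃ b ∈ ε • Metric.closedBall (0 : X) 1,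
        p (i : ι) = x n + b := by
      rintro ⟨i, hi⟩
      obtain ⟨a, ⟨n, hn, rfl⟩, b, hb, hab⟩ := hps i hi
      exact ⟨n, hn, b, hb, hab.symm⟩
    choose N hN b hbmem hpb using hps'
    have hw1' : ∑ i ∈ t.attach, w i = 1 := by rw [Finset.sum_attach]; exact hw1
    have hcsum : c = ∑ i ∈ t.attach, w i • p (i : ι) := by
      rw [← hcm, Finset.centerMass_eq_of_sum_1 _ _ hw1, ← Finset.sum_attach t fun i => w i • p i]
    set s : ℝ := ∑ i ∈ t.attach, w i * u (N i) with hsdef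
    set g : ℕ → ℝ := fun m => ∑ i ∈ t.attach, w i * f m (x (N i)) with hgdef
    have hg : Tendsto g atTop (𝓝 s) := by
      apply tendsto_finset_sum
      intro i _
      exact ((hu (N i)).const_mul (w i))
    have hsl : |s - l| ≤ δ := by
      have : ∑ i ∈ t.attach, w i * (u (N i) - l) = s - l := by
        simp only [mul_sub]
        rw [Finset.sum_sub_distrib, ← Finset.sum_mul, hw1', one_mul, hsdef]
      rw [← this]
      calc |∑ i ∈ t.attach, w i * (u (N i) - l)| ≤ ∑ i ∈ t.attach, |w i * (u (N i) - l)| :=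
            Finset.abs_sum_le_sum_abs _ _
        _ ≤ ∑ i ∈ t.attach, w i * δ := by
            apply Finset.sum_le_sum
            intro i _
            rw [abs_mul, abs_of_nonneg (hw0 i i.2)]
            have hd : |u (N i) - l| ≤ δ := by
              have := hk (N i) (hN i); rw [Real.dist_eq] at this; linarith
            exact mul_le_mul_of_nonneg_left hd (hw0 i i.2)
        _ = δ := by rw [← Finset.sum_mul, hw1', one_mul]
    have hfcg : ∀ m, |f m c - g m| ≤ ε := by
      intro m
      have : f m c - g m = ∑ i ∈ t.attach, w i * f m (b i) := by
        rw [hcsum, map_sum, hgdef]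
        rw [← Finset.sum_sub_distrib]
        congr 1; ext i
        rw [hpb i, map_smul, map_add, smul_eq_mul]
        ring
      rw [this]
      calc |∑ i ∈ t.attach, w i * f m (b i)| ≤ ∑ i ∈ t.attach, |w i * f m (b i)| :=
            Finset.abs_sum_le_sum_abs _ _
        _ ≤ ∑ i ∈ t.attach, w i * ε := by
            apply Finset.sum_le_sum
            intro i _
            rw [abs_mul, abs_of_nonneg (hw0 i i.2)]
            exact mul_le_mul_of_nonneg_left (hball m (b i) (hbmem i)) (hw0 i i.2)
        _ = ε := by rw [← Finset.sum_mul, hw1', one_mul]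
    have hfzc : ∀ m, |f m z - f m c| ≤ δ := by
      intro m
      have h1 : ‖f m (z - c)‖ ≤ ‖f m‖ * ‖z - c‖ := (f m).le_opNorm _
      have h3 : ‖f m‖ ≤ 1 := hf m
      have h4 : ‖z - c‖ ≤ δ := by rw [← dist_eq_norm]; exact hcz.le
      have h0 : (0:ℝ) ≤ ‖z - c‖ := norm_nonneg _
      calc |f m z - f m c| = ‖f m (z - c)‖ := by rw [← map_sub, Real.norm_eq_abs]
        _ ≤ ‖f m‖ * ‖z - c‖ := h1
        _ ≤ 1 * δ := by nlinarith
        _ = δ := one_mul δ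
    obtain ⟨M1, hM1⟩ := Metric.tendsto_atTop.mp hg δ hδ
    obtain ⟨M2, hM2⟩ := Metric.tendsto_atTop.mp hvL δ hδ
    set m := max M1 M2
    have e1 : |g m - s| < δ := by
      have := hM1 m (le_max_left _ _); rwa [Real.dist_eq] at this
    have e2 : |v m - L| < δ := by
      have := hM2 m (le_max_right _ _); rwa [Real.dist_eq] at this
    have e3 := abs_le.mp (claimA m)
    have e4 := abs_le.mp (hfcg m)
    have e5 := abs_le.mp (hfzc m)
    have e6 := abs_le.mp hsl
    have e1' := abs_le.mp e1.le
    have e2' := abs_le.mp e2.le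
    rw [abs_le]
    constructor <;> linarith [e3.1, e3.2, e4.1, e4.2, e5.1, e5.2, e6.1, e6.2,
      e1'.1, e1'.2, e2'.1, e2'.2]
  by_contra hcon
  push_neg at hcon
  have := key ((|l - L| - 2 * ε)/8) (by linarith)
  linarith
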